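/- Let π be a finite signed measure on ℝ which is symmetric (invariant under the map y ↦ −y), has total mass zero (π(ℝ) = 0), has finite fourth moment (∫ |y|⁴ d|π|(y) < ∞, where |π| denotes the total variation measure of π), and satisfies ∫ y² dπ(y) = 2. Define φ : ℝ → ℝ by φ(u) = (1 − cos u)/u² for u ≠ 0 and φ(0) = 1/2, and set f(x) = ∫ φ(x·y)·y² dπ(y) for x ∈ ℝ. Then: (i) for every x ≠ 0 one has f(x) = −x^{−2} ∫ e^{ixy} dπ(y) (this integral is real by symmetry); (ii) f is twice continuously differentiable on ℝ; (iii) f, f′ and f″ are bounded on ℝ; and (iv) f(0) = 1. -/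

import Mathlib

open MeasureTheory

/-- Integral of a real function against a finite signed measure, via the Jordan decomposition. -/
noncomputable def signedIntegral (p : SignedMeasure ℝ) (g : ℝ → ℝ) : ℝ :=
  (∫ y, g y ∂p.toJordanDecomposition.posPart) - ∫ y, g y ∂p.toJordanDecomposition.negPart

/-- Integral of a complex function against a finite signed measure, via the Jordan
decomposition. -/
noncomputable def csignedIntegral (p : SignedMeasure ℝ) (g : ℝ → ℂ) : ℂ :=
  (∫ y, g y ∂p.toJordanDecomposition.posPart) - ∫ y, g y ∂p.toJordanDecomposition.negPart

/-- `φ(u) = (1 - cos u)/u²` for `u ≠ 0`, and `φ(0) = 1/2`. -/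
noncomputable def phiFn (u : ℝ) : ℝ := if u = 0 then 1/2 else (1 - Real.cos u) / u ^ 2

/-- `f(x) = ∫ φ(x y) y² dπ(y)`. -/
noncomputable def fFn (p : SignedMeasure ℝ) (x : ℝ) : ℝ :=
  signedIntegral p (fun y => phiFn (x * y) * y ^ 2)

/-! ### Auxiliary lemmas about `phiFn` -/

private lemma tendsto_one_sub_cos :
    Filter.Tendsto (fun u : ℝ => (1 - Real.cos u) / u ^ 2) (nhdsWithin 0 {0}ᶜ) (nhds (1/2)) := by
  have hsin : Filter.Tendsto (fun t : ℝ => Real.sin t / t) (nhdsWithin 0 {0}ᶜ) (nhds 1) := by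
    have h := hasDerivAt_iff_tendsto_slope.mp (Real.hasDerivAt_sin 0)
    rw [Real.cos_zero] at h
    refine h.congr' ?_
    filter_upwards [self_mem_nhdsWithin] with t ht
    simp [slope_def_field, Real.sin_zero]
  have hhalf : Filter.Tendsto (fun u : ℝ => u / 2) (nhdsWithin 0 {0}ᶜ) (nhdsWithin 0 {0}ᶜ) := by
    apply Filter.Tendsto.inf
    · simpa using (continuous_id.div_const 2).tendsto (0:ℝ)
    · refine Filter.tendsto_principal.2 ?_
      filter_upwards [Filter.mem_principal_self _] with u hu
      simp only [Set.mem_compl_iff, Set.mem_singleton_iff] at hu ⊢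
      intro h; exact hu (by linarith)
  have hmain : Filter.Tendsto (fun u : ℝ => (Real.sin (u/2) / (u/2)) ^ 2 / 2)
      (nhdsWithin 0 {0}ᶜ) (nhds (1/2)) := by
    have := ((hsin.comp hhalf).pow 2).div_const 2
    simpa using this
  refine hmain.congr' ?_
  filter_upwards [self_mem_nhdsWithin] with u hu
  simp only [Set.mem_compl_iff, Set.mem_singleton_iff] at hu
  have h1 : 1 - Real.cos u = 2 * Real.sin (u/2) ^ 2 := by
    have h2 : Real.cos (2 * (u/2)) = 1 - 2 * Real.sin (u/2) ^ 2 := by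
      rw [Real.cos_two_mul, Real.cos_sq']; ring
    rw [show (2:ℝ) * (u/2) = u by ring] at h2
    linarith
  rw [h1]
  field_simp

private lemma phiFn_eq_dslope :
    phiFn = dslope (dslope (fun u : ℝ => 1 - Real.cos u) 0) 0 ∧
    AnalyticAt ℝ (dslope (dslope (fun u : ℝ => 1 - Real.cos u) 0) 0) 0 := by
  set c : ℝ → ℝ := fun u => 1 - Real.cos u with hc
  set d1 := dslope c 0 with hd1def
  set d2 := dslope d1 0 with hd2def
  have hca : AnalyticAt ℝ c 0 :=
    analyticAt_const.sub (((Real.contDiff_cos (n := (⊤ : WithTop ℕ∞))).analyticOnNhd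
      (s := Set.univ)) 0 (Set.mem_univ 0))
  obtain ⟨ps, hps⟩ := hca
  have hd1a : AnalyticAt ℝ d1 0 := ⟨_, hps.has_fpower_series_dslope_fslope⟩
  have hd2a : AnalyticAt ℝ d2 0 :=
    ⟨_, hps.has_fpower_series_dslope_fslope.has_fpower_series_dslope_fslope⟩
  have hc0 : c 0 = 0 := by simp [hc]
  have hd1_0 : d1 0 = 0 := by
    rw [hd1def, dslope_same]
    have : HasDerivAt c (Real.sin 0) 0 := by
      simpa using (Real.hasDerivAt_cos 0).const_sub 1
    simp [this.deriv]
  have hd1ne : ∀ u : ℝ, u ≠ 0 → d1 u = (1 - Real.cos u) / u := by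
    intro u hu
    rw [hd1def, dslope_of_ne _ hu, slope_def_field, hc0]
    simp [hc]
  have hd2ne : ∀ u : ℝ, u ≠ 0 → d2 u = (1 - Real.cos u) / u ^ 2 := by
    intro u hu
    rw [hd2def, dslope_of_ne _ hu, slope_def_field, hd1_0, hd1ne u hu,
      sub_zero, sub_zero, div_div, ← pow_two]
  have hd2_0 : d2 0 = 1/2 := by
    rw [hd2def, dslope_same]
    have hder : HasDerivAt d1 (deriv d1 0) 0 := hd1a.differentiableAt.hasDerivAt
    have h1 := hasDerivAt_iff_tendsto_slope.mp hder
    have h2 : Filter.Tendsto (slope d1 0) (nhdsWithin 0 {0}ᶜ) (nhds (1/2)) := by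
      refine tendsto_one_sub_cos.congr' ?_
      filter_upwards [self_mem_nhdsWithin] with u hu
      simp only [Set.mem_compl_iff, Set.mem_singleton_iff] at hu
      rw [slope_def_field, hd1_0, hd1ne u hu, sub_zero, sub_zero, div_div, ← pow_two]
    exact tendsto_nhds_unique h1 h2
  constructor
  · funext u
    by_cases hu : u = 0
    · simp [phiFn, hu, hd2_0]
    · simp [phiFn, hu, hd2ne u hu]
  · exact hd2a

private lemma phiFn_contDiff : ContDiff ℝ 3 phiFn := by
  obtain ⟨heq, ha⟩ := phiFn_eq_dslope
  rw [heq]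
  rw [contDiff_iff_contDiffAt]
  intro u
  by_cases hu : u = 0
  · subst hu; exact ha.contDiffAt
  · have hg : ContDiffAt ℝ 3 (fun v : ℝ => (1 - Real.cos v) / v ^ 2) u := by
      exact (contDiffAt_const.sub Real.contDiff_cos.contDiffAt).div
        (contDiffAt_id.pow 2) (pow_ne_zero 2 hu)
    refine hg.congr_of_eventuallyEq ?_
    have hopen : ∀ᶠ v in nhds u, v ≠ 0 := eventually_ne_nhds hu
    filter_upwards [hopen] with v hv
    rw [← heq]
    simp [phiFn, hv]

private lemma phiFn_eq_of_ne {u : ℝ} (hu : u ≠ 0) :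
    phiFn =ᶠ[nhds u] fun v => (1 - Real.cos v) / v ^ 2 := by
  filter_upwards [eventually_ne_nhds hu] with v hv
  simp [phiFn, hv]

private lemma hasDeriv_one_sub_cos (u : ℝ) :
    HasDerivAt (fun v : ℝ => 1 - Real.cos v) (Real.sin u) u := by
  simpa using (Real.hasDerivAt_cos u).const_sub 1

private lemma deriv_phiFn_of_ne {u : ℝ} (hu : u ≠ 0) :
    deriv phiFn u =
      (Real.sin u * u ^ 2 - (1 - Real.cos u) * (2 * u)) / u ^ 4 := by
  rw [(phiFn_eq_of_ne hu).deriv_eq]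
  have h2 : HasDerivAt (fun v : ℝ => v ^ 2) (2 * u) u := by
    simpa using hasDerivAt_pow 2 u
  have := (hasDeriv_one_sub_cos u).div h2 (pow_ne_zero 2 hu)
  rw [show deriv (fun v : ℝ => (1 - Real.cos v) / v ^ 2) u = _ from this.deriv, show ((u:ℝ)^2)^2 = u^4 by ring]

private lemma deriv2_phiFn_of_ne {u : ℝ} (hu : u ≠ 0) :
    deriv (deriv phiFn) u =
      ((Real.cos u * u ^ 2 - 2 * (1 - Real.cos u)) * u -
        (Real.sin u * u ^ 2 - (1 - Real.cos u) * (2 * u)) * 4) / u ^ 5 := by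
  have hev : deriv phiFn =ᶠ[nhds u]
      fun v => (Real.sin v * v ^ 2 - (1 - Real.cos v) * (2 * v)) / v ^ 4 := by
    filter_upwards [eventually_ne_nhds hu] with v hv
    exact deriv_phiFn_of_ne hv
  rw [hev.deriv_eq]
  have hpow2 : HasDerivAt (fun v : ℝ => v ^ 2) (2 * u) u := by
    simpa using hasDerivAt_pow 2 u
  have hA : HasDerivAt (fun v : ℝ => Real.sin v * v ^ 2)
      (Real.cos u * u ^ 2 + Real.sin u * (2 * u)) u :=
    (Real.hasDerivAt_sin u).mul hpow2
  have hlin : HasDerivAt (fun v : ℝ => 2 * v) 2 u := by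
    simpa using (hasDerivAt_id u).const_mul 2
  have hB : HasDerivAt (fun v : ℝ => (1 - Real.cos v) * (2 * v))
      (Real.sin u * (2 * u) + (1 - Real.cos u) * 2) u :=
    (hasDeriv_one_sub_cos u).mul hlin
  have hpow4 : HasDerivAt (fun v : ℝ => v ^ 4) (4 * u ^ 3) u := by
    simpa using hasDerivAt_pow 4 u
  have := (hA.sub hB).div hpow4 (pow_ne_zero 4 hu)
  rw [show deriv (fun v : ℝ => (Real.sin v * v ^ 2 - (1 - Real.cos v) * (2 * v)) / v ^ 4) u = _
    from this.deriv, div_eq_div_iff (by positivity) (pow_ne_zero 5 hu)]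
  dsimp only [Pi.sub_apply]
  ring

private lemma bounded_of_bounded_outside {g : ℝ → ℝ} (hg : Continuous g) {K : ℝ}
    (h : ∀ u : ℝ, 1 ≤ |u| → |g u| ≤ K) : ∃ C : ℝ, ∀ u, |g u| ≤ C := by
  obtain ⟨C, hC⟩ := (isCompact_Icc (a := (-1 : ℝ)) (b := 1)).exists_bound_of_continuousOn
    hg.continuousOn
  refine ⟨max C K, fun u => ?_⟩
  rcases le_or_gt 1 |u| with h1 | h1
  · exact (h u h1).trans (le_max_right _ _)
  · have hu : u ∈ Set.Icc (-1 : ℝ) 1 := by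
      have := abs_le.mp h1.le
      exact ⟨this.1, this.2⟩
    have := hC u hu
    rw [Real.norm_eq_abs] at this
    exact this.trans (le_max_left _ _)

private lemma phiFn_bound : ∃ C : ℝ, ∀ u, |phiFn u| ≤ C := by
  refine bounded_of_bounded_outside (phiFn_contDiff.continuous) ?_ (K := 2)
  intro u hu
  have hune : u ≠ 0 := by intro h; rw [h] at hu; simp at hu; linarith
  have hu2 : (1 : ℝ) ≤ u ^ 2 := by nlinarith [sq_abs u]
  rw [show phiFn u = (1 - Real.cos u) / u ^ 2 by simp [phiFn, hune], abs_div,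
    abs_of_nonneg (by positivity : (0:ℝ) ≤ u ^ 2), div_le_iff₀ (by positivity)]
  have h1 := Real.cos_le_one u
  have h2 := Real.neg_one_le_cos u
  rw [abs_le]
  constructor <;> nlinarith

private lemma deriv_phiFn_bound : ∃ C : ℝ, ∀ u, |deriv phiFn u| ≤ C := by
  refine bounded_of_bounded_outside (phiFn_contDiff.continuous_deriv (by norm_num)) ?_ (K := 5)
  intro u hu
  have hune : u ≠ 0 := by intro h; rw [h] at hu; simp at hu; linarith
  have hu2 : (1 : ℝ) ≤ u ^ 2 := by nlinarith [sq_abs u]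
  have habs : |u| ≤ u ^ 2 := by nlinarith [sq_abs u]
  have h24 : u ^ 2 ≤ u ^ 4 := by nlinarith
  rw [deriv_phiFn_of_ne hune, abs_div, abs_of_nonneg (by positivity : (0:ℝ) ≤ u ^ 4),
    div_le_iff₀ (by positivity)]
  have h1 := Real.cos_le_one u
  have h2 := Real.neg_one_le_cos u
  calc |Real.sin u * u ^ 2 - (1 - Real.cos u) * (2 * u)|
      ≤ |Real.sin u * u ^ 2| + |(1 - Real.cos u) * (2 * u)| := abs_sub _ _
    _ = |Real.sin u| * u ^ 2 + |1 - Real.cos u| * (2 * |u|) := by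
        rw [abs_mul, abs_mul, abs_pow, sq_abs, abs_mul]
        norm_num [mul_comm]
    _ ≤ 1 * u ^ 2 + 2 * (2 * |u|) := by
        gcongr
        · exact Real.abs_sin_le_one u
        · rw [abs_le]; constructor <;> nlinarith
    _ ≤ 5 * u ^ 4 := by nlinarith [abs_nonneg u]

private lemma contDiff_deriv_phiFn : ContDiff ℝ 2 (deriv phiFn) := by
  have h := phiFn_contDiff
  rw [show (3 : WithTop ℕ∞) = 2 + 1 from rfl] at h
  exact (contDiff_succ_iff_deriv.mp h).2.2

private lemma deriv2_phiFn_cont : Continuous (deriv (deriv phiFn)) :=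
  contDiff_deriv_phiFn.continuous_deriv (by norm_num)

private lemma deriv2_phiFn_bound : ∃ C : ℝ, ∀ u, |deriv (deriv phiFn) u| ≤ C := by
  refine bounded_of_bounded_outside deriv2_phiFn_cont ?_ (K := 25)
  intro u hu
  have hune : u ≠ 0 := by intro h; rw [h] at hu; simp at hu; linarith
  have hu2 : (1 : ℝ) ≤ u ^ 2 := by nlinarith [sq_abs u]
  have h1 := Real.cos_le_one u
  have h2 := Real.neg_one_le_cos u
  have hN : |Real.sin u * u ^ 2 - (1 - Real.cos u) * (2 * u)| ≤ u ^ 2 + 4 * |u| := by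
    calc |Real.sin u * u ^ 2 - (1 - Real.cos u) * (2 * u)|
        ≤ |Real.sin u * u ^ 2| + |(1 - Real.cos u) * (2 * u)| := abs_sub _ _
      _ = |Real.sin u| * u ^ 2 + |1 - Real.cos u| * (2 * |u|) := by
          rw [abs_mul, abs_mul, abs_pow, sq_abs, abs_mul]
          norm_num [mul_comm]
      _ ≤ 1 * u ^ 2 + 2 * (2 * |u|) := by
          gcongr
          · exact Real.abs_sin_le_one u
          · rw [abs_le]; constructor <;> nlinarith
      _ ≤ u ^ 2 + 4 * |u| := by nlinarith [abs_nonneg u]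
  have hN' : |Real.cos u * u ^ 2 - 2 * (1 - Real.cos u)| ≤ u ^ 2 + 4 := by
    rw [abs_le]; constructor <;> nlinarith
  rw [deriv2_phiFn_of_ne hune, abs_div, div_le_iff₀ (by positivity : (0:ℝ) < |u ^ 5|)]
  have ha5 : |u ^ 5| = |u| ^ 5 := abs_pow u 5
  calc |(Real.cos u * u ^ 2 - 2 * (1 - Real.cos u)) * u -
        (Real.sin u * u ^ 2 - (1 - Real.cos u) * (2 * u)) * 4|
      ≤ |(Real.cos u * u ^ 2 - 2 * (1 - Real.cos u)) * u| +
        |(Real.sin u * u ^ 2 - (1 - Real.cos u) * (2 * u)) * 4| := abs_sub _ _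
    _ = |Real.cos u * u ^ 2 - 2 * (1 - Real.cos u)| * |u| +
        |Real.sin u * u ^ 2 - (1 - Real.cos u) * (2 * u)| * 4 := by
        rw [abs_mul, abs_mul]; norm_num
    _ ≤ (u ^ 2 + 4) * |u| + (u ^ 2 + 4 * |u|) * 4 := by gcongr
    _ ≤ 25 * |u ^ 5| := by
        rw [ha5, ← sq_abs u]
        have h3 : |u| ^ 3 ≤ |u| ^ 5 := pow_le_pow_right₀ hu (by norm_num)
        have h4 : |u| ^ 2 ≤ |u| ^ 5 := pow_le_pow_right₀ hu (by norm_num)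
        have h5 : |u| ≤ |u| ^ 5 := by
          calc |u| = |u| ^ 1 := (pow_one _).symm
            _ ≤ |u| ^ 5 := pow_le_pow_right₀ hu (by norm_num)
        nlinarith [abs_nonneg u]

/-! ### Auxiliary lemmas about parametric integrals -/

private lemma integrable_abs_pow {μ : Measure ℝ} [IsFiniteMeasure μ]
    (h4 : (∫⁻ y, ENNReal.ofReal (|y| ^ 4) ∂μ) < ⊤) {k : ℕ} (hk : k ≤ 4) :
    Integrable (fun y : ℝ => |y| ^ k) μ := by
  have h4i : Integrable (fun y : ℝ => |y| ^ 4) μ := by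
    refine ⟨(continuous_abs.pow 4).aestronglyMeasurable, ?_⟩
    rw [hasFiniteIntegral_iff_norm]
    calc (∫⁻ y, ENNReal.ofReal ‖|y| ^ 4‖ ∂μ)
        = ∫⁻ y, ENNReal.ofReal (|y| ^ 4) ∂μ := by
          congr 1; funext y
          rw [Real.norm_eq_abs, abs_of_nonneg (by positivity)]
      _ < ⊤ := h4
  refine (h4i.add (integrable_const 1)).mono'
    ((continuous_abs.pow k).aestronglyMeasurable) ?_
  refine Filter.Eventually.of_forall fun y => ?_
  rw [Real.norm_eq_abs, abs_of_nonneg (by positivity)]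
  simp only [Pi.add_apply]
  rcases le_or_gt (|y|) 1 with h | h
  · have : |y| ^ k ≤ 1 := pow_le_one₀ (abs_nonneg y) h
    have h0 : (0:ℝ) ≤ |y| ^ 4 := by positivity
    linarith
  · have : |y| ^ k ≤ |y| ^ 4 := pow_le_pow_right₀ h.le hk
    linarith

private lemma paramInt_hasDeriv {μ : Measure ℝ} [IsFiniteMeasure μ]
    (h4 : (∫⁻ y, ENNReal.ofReal (|y| ^ 4) ∂μ) < ⊤)
    {φ ψ : ℝ → ℝ} (hφ : Continuous φ) (hψ : Continuous ψ)
    (hd : ∀ u, HasDerivAt φ (ψ u) u)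
    {D C : ℝ} (hD : ∀ u, |φ u| ≤ D) (hC : ∀ u, |ψ u| ≤ C)
    {k : ℕ} (hk : k ≤ 3) (x₀ : ℝ) :
    HasDerivAt (fun x => ∫ y, φ (x * y) * y ^ k ∂μ)
      (∫ y, ψ (x₀ * y) * y ^ (k + 1) ∂μ) x₀ := by
  have hmeas : ∀ x : ℝ, AEStronglyMeasurable (fun y : ℝ => φ (x * y) * y ^ k) μ :=
    fun x => ((hφ.comp (continuous_const.mul continuous_id)).mul
      (continuous_pow k)).aestronglyMeasurable
  have hint : Integrable (fun y : ℝ => φ (x₀ * y) * y ^ k) μ := by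
    refine ((integrable_abs_pow h4 (by omega : k ≤ 4)).const_mul D).mono' (hmeas x₀) ?_
    refine Filter.Eventually.of_forall fun y => ?_
    rw [Real.norm_eq_abs, abs_mul, abs_pow]
    exact mul_le_mul_of_nonneg_right (hD _) (by positivity)
  have key := hasDerivAt_integral_of_dominated_loc_of_deriv_le (Metric.ball_mem_nhds x₀ one_pos)
    (Filter.Eventually.of_forall hmeas) hint
    (F' := fun x y => ψ (x * y) * y ^ (k + 1))
    (((hψ.comp (continuous_const.mul continuous_id)).mul
      (continuous_pow (k+1))).aestronglyMeasurable)
    (bound := fun y => C * |y| ^ (k + 1))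
    (Filter.Eventually.of_forall fun y x _ => by
      rw [Real.norm_eq_abs, abs_mul, abs_pow]
      exact mul_le_mul_of_nonneg_right (hC _) (by positivity))
    ((integrable_abs_pow h4 (by omega : k + 1 ≤ 4)).const_mul C)
    (Filter.Eventually.of_forall fun y x _ => by
      have h1 : HasDerivAt (fun x : ℝ => φ (x * y)) (ψ (x * y) * y) x :=
        HasDerivAt.comp x (hd (x * y)) (hasDerivAt_mul_const y)
      have := h1.mul_const (y ^ k)
      refine this.congr_deriv ?_
      ring)
  exact key.2

private lemma paramInt_continuous {μ : Measure ℝ} [IsFiniteMeasure μ]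
    (h4 : (∫⁻ y, ENNReal.ofReal (|y| ^ 4) ∂μ) < ⊤)
    {ψ : ℝ → ℝ} (hψ : Continuous ψ) {C : ℝ} (hC : ∀ u, |ψ u| ≤ C)
    {k : ℕ} (hk : k ≤ 4) :
    Continuous (fun x => ∫ y, ψ (x * y) * y ^ k ∂μ) := by
  rw [continuous_iff_continuousAt]
  intro x₀
  refine continuousAt_of_dominated (bound := fun y => C * |y| ^ k)
    (Filter.Eventually.of_forall fun x =>
      ((hψ.comp (continuous_const.mul continuous_id)).mul (continuous_pow k)).aestronglyMeasurable)
    (Filter.Eventually.of_forall fun x => Filter.Eventually.of_forall fun y => by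
      rw [Real.norm_eq_abs, abs_mul, abs_pow]
      exact mul_le_mul_of_nonneg_right (hC _) (by positivity))
    ((integrable_abs_pow h4 hk).const_mul C)
    (Filter.Eventually.of_forall fun y => by
      exact ((hψ.comp (continuous_id.mul continuous_const)).mul continuous_const).continuousAt)

private lemma paramInt_bound {μ : Measure ℝ} [IsFiniteMeasure μ]
    (h4 : (∫⁻ y, ENNReal.ofReal (|y| ^ 4) ∂μ) < ⊤)
    {ψ : ℝ → ℝ} {C : ℝ} (hC : ∀ u, |ψ u| ≤ C)
    {k : ℕ} (hk : k ≤ 4) (x : ℝ) :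
    |∫ y, ψ (x * y) * y ^ k ∂μ| ≤ C * ∫ y, |y| ^ k ∂μ := by
  rw [← Real.norm_eq_abs]
  rw [show C * ∫ y, |y| ^ k ∂μ = ∫ y, C * |y| ^ k ∂μ from (MeasureTheory.integral_const_mul _ _).symm]
  refine norm_integral_le_of_norm_le ((integrable_abs_pow h4 hk).const_mul C) ?_
  refine Filter.Eventually.of_forall fun y => ?_
  rw [Real.norm_eq_abs, abs_mul, abs_pow]
  exact mul_le_mul_of_nonneg_right (hC _) (by positivity)

/-! ### Auxiliary lemmas about the Jordan decomposition and symmetry -/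

private lemma signedMeasure_apply_jordan (p : SignedMeasure ℝ) {i : Set ℝ}
    (hi : MeasurableSet i) :
    p i = (p.toJordanDecomposition.posPart i).toReal -
      (p.toJordanDecomposition.negPart i).toReal := by
  conv_lhs => rw [← p.toSignedMeasure_toJordanDecomposition]
  rw [JordanDecomposition.toSignedMeasure, VectorMeasure.sub_apply,
    Measure.toSignedMeasure_apply_measurable hi, Measure.toSignedMeasure_apply_measurable hi]
  rfl

private lemma jordan_map_neg (p : SignedMeasure ℝ) (hsym : p.map (fun y => -y) = p) :
    p.toJordanDecomposition.posPart.map (fun y : ℝ => -y) = p.toJordanDecomposition.posPart ∧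
    p.toJordanDecomposition.negPart.map (fun y : ℝ => -y) = p.toJordanDecomposition.negPart := by
  set j := p.toJordanDecomposition with hj
  have hmeasneg : Measurable (fun y : ℝ => -y) := measurable_neg
  have hsing : j.posPart.map (fun y : ℝ => -y) ⟂ₘ j.negPart.map (fun y : ℝ => -y) := by
    obtain ⟨s, hs, h1, h2⟩ := j.mutuallySingular
    refine ⟨(fun y : ℝ => -y) ⁻¹' s, hs.preimage hmeasneg, ?_, ?_⟩
    · rw [Measure.map_apply hmeasneg (hs.preimage hmeasneg), Set.preimage_preimage]
      simpa using h1
    · rw [← Set.preimage_compl, Measure.map_apply hmeasneg (hs.compl.preimage hmeasneg),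
        Set.preimage_preimage]
      simpa using h2
  set j' : JordanDecomposition ℝ :=
    ⟨j.posPart.map (fun y : ℝ => -y), j.negPart.map (fun y : ℝ => -y), hsing⟩ with hj'
  have heq : p.map (fun y : ℝ => -y) = j'.toSignedMeasure := by
    ext i hi
    rw [VectorMeasure.map_apply _ hmeasneg hi, JordanDecomposition.toSignedMeasure,
      VectorMeasure.sub_apply, Measure.toSignedMeasure_apply_measurable hi,
      Measure.toSignedMeasure_apply_measurable hi]
    show p ((fun y : ℝ => -y) ⁻¹' i) =
      (j.posPart.map (fun y : ℝ => -y) i).toReal - (j.negPart.map (fun y : ℝ => -y) i).toReal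
    rw [Measure.map_apply hmeasneg hi, Measure.map_apply hmeasneg hi,
      signedMeasure_apply_jordan p (hi.preimage hmeasneg)]
  have h := MeasureTheory.SignedMeasure.toJordanDecomposition_eq heq
  rw [hsym] at h
  rw [← hj] at h
  constructor
  · have := congrArg JordanDecomposition.posPart h
    simpa [hj'] using this.symm
  · have := congrArg JordanDecomposition.negPart h
    simpa [hj'] using this.symm

private lemma integrable_trig {μ : Measure ℝ} [IsFiniteMeasure μ] {g : ℝ → ℝ}
    (hg : Continuous g) (hb : ∀ u, |g u| ≤ 1) (x : ℝ) :
    Integrable (fun y => g (x * y)) μ := by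
  refine (integrable_const 1).mono'
    ((hg.comp (continuous_const.mul continuous_id)).aestronglyMeasurable) ?_
  exact Filter.Eventually.of_forall fun y => by rw [Real.norm_eq_abs]; exact hb _

private lemma integral_sin_eq_zero {μ : Measure ℝ} [IsFiniteMeasure μ]
    (hmap : μ.map (fun y : ℝ => -y) = μ) (x : ℝ) :
    ∫ y, Real.sin (x * y) ∂μ = 0 := by
  have h1 : ∫ y, Real.sin (x * y) ∂μ = ∫ y, Real.sin (x * -y) ∂μ := by
    conv_lhs => rw [← hmap]
    rw [integral_map measurable_neg.aemeasurable
      (Continuous.aestronglyMeasurable (by fun_prop))]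
  have h2 : ∀ y : ℝ, Real.sin (x * -y) = -Real.sin (x * y) := by
    intro y; rw [show x * -y = -(x * y) by ring, Real.sin_neg]
  simp_rw [h2] at h1
  rw [integral_neg] at h1
  linarith

private lemma integral_cexp {μ : Measure ℝ} [IsFiniteMeasure μ]
    (hmap : μ.map (fun y : ℝ => -y) = μ) (x : ℝ) :
    ∫ y, Complex.exp (Complex.I * (x : ℂ) * (y : ℂ)) ∂μ =
      ((∫ y, Real.cos (x * y) ∂μ : ℝ) : ℂ) := by
  have hrw : ∀ y : ℝ, Complex.exp (Complex.I * (x : ℂ) * (y : ℂ)) =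
      ((Real.cos (x * y) : ℝ) : ℂ) + ((Real.sin (x * y) : ℝ) : ℂ) * Complex.I := by
    intro y
    rw [show Complex.I * (x : ℂ) * (y : ℂ) = ((x * y : ℝ) : ℂ) * Complex.I by push_cast; ring,
      Complex.exp_mul_I, Complex.ofReal_cos, Complex.ofReal_sin]
  simp_rw [hrw]
  have hic : Integrable (fun y => ((Real.cos (x * y) : ℝ) : ℂ)) μ :=
    (integrable_trig Real.continuous_cos (fun u => Real.abs_cos_le_one u) x).ofReal
  have his : Integrable (fun y => ((Real.sin (x * y) : ℝ) : ℂ) * Complex.I) μ :=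
    ((integrable_trig Real.continuous_sin (fun u => Real.abs_sin_le_one u) x).ofReal).mul_const _
  rw [integral_add hic his, integral_mul_const]
  have hre : ∀ g : ℝ → ℝ, Integrable g μ → ∫ y, ((g y : ℝ) : ℂ) ∂μ = ((∫ y, g y ∂μ : ℝ) : ℂ) := by
    intro g hg
    exact integral_ofReal
  rw [hre _ (integrable_trig Real.continuous_cos (fun u => Real.abs_cos_le_one u) x),
    hre _ (integrable_trig Real.continuous_sin (fun u => Real.abs_sin_le_one u) x),
    integral_sin_eq_zero hmap x]
  simp

theorem stmt1 (p : SignedMeasure ℝ)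
    (hsym : p.map (fun y => -y) = p)
    (hmass : p Set.univ = 0)
    (hmom4 : (∫⁻ y, ENNReal.ofReal (|y| ^ 4) ∂p.totalVariation) < ⊤)
    (hvar : signedIntegral p (fun y => y ^ 2) = 2) :
    (∀ x : ℝ, x ≠ 0 → (fFn p x : ℂ) =
      -((x : ℂ) ^ 2)⁻¹ *
        csignedIntegral p (fun y => Complex.exp (Complex.I * (x : ℂ) * (y : ℂ)))) ∧
    ContDiff ℝ 2 (fFn p) ∧
    (∃ M : ℝ, ∀ x : ℝ,
      |fFn p x| ≤ M ∧ |deriv (fFn p) x| ≤ M ∧ |deriv (deriv (fFn p)) x| ≤ M) ∧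
    fFn p 0 = 1 := by
  classical
  set μ := p.toJordanDecomposition.posPart with hμdef
  set ν := p.toJordanDecomposition.negPart with hνdef
  have htv : p.totalVariation = μ + ν := rfl
  rw [htv, lintegral_add_measure] at hmom4
  have hμ4 : (∫⁻ y, ENNReal.ofReal (|y| ^ 4) ∂μ) < ⊤ :=
    lt_of_le_of_lt le_self_add hmom4
  have hν4 : (∫⁻ y, ENNReal.ofReal (|y| ^ 4) ∂ν) < ⊤ :=
    lt_of_le_of_lt le_add_self hmom4
  obtain ⟨C0, hC0⟩ := phiFn_bound
  obtain ⟨C1, hC1⟩ := deriv_phiFn_bound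
  obtain ⟨C2, hC2⟩ := deriv2_phiFn_bound
  have hφcont : Continuous phiFn := phiFn_contDiff.continuous
  have hφ1cont : Continuous (deriv phiFn) := phiFn_contDiff.continuous_deriv (by norm_num)
  have hφ2cont : Continuous (deriv (deriv phiFn)) := deriv2_phiFn_cont
  have hφd : ∀ u, HasDerivAt phiFn (deriv phiFn u) u := fun u =>
    ((phiFn_contDiff.differentiable (by norm_num)) u).hasDerivAt
  have hφ1d : ∀ u, HasDerivAt (deriv phiFn) (deriv (deriv phiFn) u) u := fun u =>
    ((contDiff_deriv_phiFn.differentiable (by norm_num)) u).hasDerivAt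
  have hfFn : fFn p = fun x => (∫ y, phiFn (x * y) * y ^ 2 ∂μ) -
      ∫ y, phiFn (x * y) * y ^ 2 ∂ν := rfl
  set G1 : ℝ → ℝ := fun x => (∫ y, deriv phiFn (x * y) * y ^ 3 ∂μ) -
      ∫ y, deriv phiFn (x * y) * y ^ 3 ∂ν with hG1def
  set G2 : ℝ → ℝ := fun x => (∫ y, deriv (deriv phiFn) (x * y) * y ^ 4 ∂μ) -
      ∫ y, deriv (deriv phiFn) (x * y) * y ^ 4 ∂ν with hG2def
  have hG1 : ∀ x, HasDerivAt (fFn p) (G1 x) x := by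
    intro x
    rw [hfFn]
    exact (paramInt_hasDeriv hμ4 hφcont hφ1cont hφd hC0 hC1 (by norm_num : (2:ℕ) ≤ 3) x).sub
      (paramInt_hasDeriv hν4 hφcont hφ1cont hφd hC0 hC1 (by norm_num : (2:ℕ) ≤ 3) x)
  have hd1 : deriv (fFn p) = G1 := funext fun x => (hG1 x).deriv
  have hG2 : ∀ x, HasDerivAt G1 (G2 x) x := by
    intro x
    exact (paramInt_hasDeriv hμ4 hφ1cont hφ2cont hφ1d hC1 hC2 (by norm_num : (3:ℕ) ≤ 3) x).sub
      (paramInt_hasDeriv hν4 hφ1cont hφ2cont hφ1d hC1 hC2 (by norm_num : (3:ℕ) ≤ 3) x)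
  have hd2 : deriv G1 = G2 := funext fun x => (hG2 x).deriv
  have hG2cont : Continuous G2 :=
    (paramInt_continuous hμ4 hφ2cont hC2 (by norm_num)).sub
      (paramInt_continuous hν4 hφ2cont hC2 (by norm_num))
  refine ⟨?_, ?_, ?_, ?_⟩
  · -- part (i)
    intro x hx
    obtain ⟨hmapμ, hmapν⟩ := jordan_map_neg p hsym
    have hpt : ∀ y : ℝ, phiFn (x * y) * y ^ 2 = (1 - Real.cos (x * y)) * (x ^ 2)⁻¹ := by
      intro y
      by_cases hy : y = 0
      · simp [hy, phiFn]
      · have hxy : x * y ≠ 0 := mul_ne_zero hx hy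
        rw [show phiFn (x * y) = (1 - Real.cos (x * y)) / (x * y) ^ 2 by simp [phiFn, hxy]]
        field_simp
    have hint1 : ∀ (m : Measure ℝ), IsFiniteMeasure m →
        ∫ y, phiFn (x * y) * y ^ 2 ∂m =
          ((m Set.univ).toReal - ∫ y, Real.cos (x * y) ∂m) * (x ^ 2)⁻¹ := by
      intro m hm
      simp_rw [hpt]
      rw [integral_mul_const]
      congr 1
      rw [integral_sub (integrable_const 1)
        (integrable_trig Real.continuous_cos (fun u => Real.abs_cos_le_one u) x),
        integral_const]
      simp
      rfl
    have hmassμν : (μ Set.univ).toReal = (ν Set.univ).toReal := by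
      have h := signedMeasure_apply_jordan p MeasurableSet.univ
      rw [hmass] at h
      rw [← hμdef, ← hνdef] at h
      linarith
    have hfx : fFn p x = -(x ^ 2)⁻¹ *
        ((∫ y, Real.cos (x * y) ∂μ) - ∫ y, Real.cos (x * y) ∂ν) := by
      rw [hfFn]
      simp only
      rw [hint1 μ inferInstance, hint1 ν inferInstance, hmassμν]
      ring
    have hcs : csignedIntegral p (fun y => Complex.exp (Complex.I * (x : ℂ) * (y : ℂ))) =
        (((∫ y, Real.cos (x * y) ∂μ) - ∫ y, Real.cos (x * y) ∂ν : ℝ) : ℂ) := by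
      have : csignedIntegral p (fun y => Complex.exp (Complex.I * (x : ℂ) * (y : ℂ))) =
          (∫ y, Complex.exp (Complex.I * (x : ℂ) * (y : ℂ)) ∂μ) -
          ∫ y, Complex.exp (Complex.I * (x : ℂ) * (y : ℂ)) ∂ν := rfl
      rw [this, integral_cexp hmapμ x, integral_cexp hmapν x]
      push_cast
      ring
    rw [hfx, hcs]
    push_cast
    ring
  · -- part (ii)
    rw [show (2 : WithTop ℕ∞) = 1 + 1 from rfl, contDiff_succ_iff_deriv]
    refine ⟨fun x => (hG1 x).differentiableAt, ?_, ?_⟩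
    · intro h
      exact absurd h (by simp)
    · rw [hd1, contDiff_one_iff_deriv]
      exact ⟨fun x => (hG2 x).differentiableAt, by rw [hd2]; exact hG2cont⟩
  · -- part (iii)
    set M0 : ℝ := C0 * (∫ y, |y| ^ 2 ∂μ) + C0 * ∫ y, |y| ^ 2 ∂ν with hM0
    set M1 : ℝ := C1 * (∫ y, |y| ^ 3 ∂μ) + C1 * ∫ y, |y| ^ 3 ∂ν with hM1
    set M2 : ℝ := C2 * (∫ y, |y| ^ 4 ∂μ) + C2 * ∫ y, |y| ^ 4 ∂ν with hM2
    refine ⟨max M0 (max M1 M2), fun x => ⟨?_, ?_, ?_⟩⟩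
    · refine le_trans ?_ (le_max_left _ _)
      rw [hfFn]
      simp only
      calc |(∫ y, phiFn (x * y) * y ^ 2 ∂μ) - ∫ y, phiFn (x * y) * y ^ 2 ∂ν|
          ≤ |∫ y, phiFn (x * y) * y ^ 2 ∂μ| + |∫ y, phiFn (x * y) * y ^ 2 ∂ν| := abs_sub _ _
        _ ≤ M0 := by
            rw [hM0]
            exact add_le_add (paramInt_bound hμ4 hC0 (by norm_num) x)
              (paramInt_bound hν4 hC0 (by norm_num) x)
    · refine le_trans ?_ ((le_max_left _ _).trans (le_max_right _ _))
      rw [hd1, hG1def]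
      simp only
      calc |(∫ y, deriv phiFn (x * y) * y ^ 3 ∂μ) - ∫ y, deriv phiFn (x * y) * y ^ 3 ∂ν|
          ≤ |∫ y, deriv phiFn (x * y) * y ^ 3 ∂μ| +
            |∫ y, deriv phiFn (x * y) * y ^ 3 ∂ν| := abs_sub _ _
        _ ≤ M1 := by
            rw [hM1]
            exact add_le_add (paramInt_bound hμ4 hC1 (by norm_num) x)
              (paramInt_bound hν4 hC1 (by norm_num) x)
    · refine le_trans ?_ ((le_max_right _ _).trans (le_max_right _ _))
      rw [hd1, hd2, hG2def]
      simp only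
      calc |(∫ y, deriv (deriv phiFn) (x * y) * y ^ 4 ∂μ) -
            ∫ y, deriv (deriv phiFn) (x * y) * y ^ 4 ∂ν|
          ≤ |∫ y, deriv (deriv phiFn) (x * y) * y ^ 4 ∂μ| +
            |∫ y, deriv (deriv phiFn) (x * y) * y ^ 4 ∂ν| := abs_sub _ _
        _ ≤ M2 := by
            rw [hM2]
            exact add_le_add (paramInt_bound hμ4 hC2 (by norm_num) x)
              (paramInt_bound hν4 hC2 (by norm_num) x)
  · -- part (iv)
    have h0 : fFn p 0 = (1/2) * ((∫ y, y ^ 2 ∂μ) - ∫ y, y ^ 2 ∂ν) := by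
      rw [hfFn]
      simp only [zero_mul]
      rw [show phiFn 0 = 1/2 from by simp [phiFn]]
      rw [MeasureTheory.integral_const_mul, MeasureTheory.integral_const_mul]
      ring
    have hv : signedIntegral p (fun y => y ^ 2) = (∫ y, y ^ 2 ∂μ) - ∫ y, y ^ 2 ∂ν := rfl
    rw [h0, ← hv, hvar]
    norm_num
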